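/- Consensus in SOM^+ is not guaranteed even for clique influence graphs: there exists a memory-based silence opinion model (SOM^+) whose influence graph is a clique, but whose agents do not converge to consensus (there is no v ∈ [0,1] with lim_{t→∞} B_i^t = v for all agents i). -/

import Mathlib

open Finset Filter Topology

noncomputable section

def nbrs {n : ℕ} (I : Fin n → Fin n → ℝ) (i : Fin n) : Finset (Fin n) :=
  Finset.univ.filter (fun j => j ≠ i ∧ I j i ≠ 0)

def maxOp {n : ℕ} (hn : 0 < n) (b : Fin n → ℝ) : ℝ :=
  Finset.univ.sup' ⟨⟨0, hn⟩, Finset.mem_univ _⟩ b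

def minOp {n : ℕ} (hn : 0 < n) (b : Fin n → ℝ) : ℝ :=
  Finset.univ.inf' ⟨⟨0, hn⟩, Finset.mem_univ _⟩ b

def IsClique {n : ℕ} (I : Fin n → Fin n → ℝ) : Prop :=
  ∀ i j : Fin n, i ≠ j → I i j ≠ 0

/-- A memory-based silence opinion model (SOM⁺) on `n` agents. `P t j` is the public
opinion of agent `j` at time `t`, i.e. `B u j` for the largest `u ≤ t` with `s u j = 1`. -/
structure SOMplus (n : ℕ) where
  I : Fin n → Fin n → ℝ
  I_nonneg : ∀ i j, 0 ≤ I i j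
  I_le_one : ∀ i j, I i j ≤ 1
  sum_one : ∀ i, ∑ j ∈ insert i (nbrs I i), I j i = 1
  τ : Fin n → ℝ
  τ_mem : ∀ i, τ i ∈ Set.Icc (0:ℝ) 1
  B : ℕ → Fin n → ℝ
  s : ℕ → Fin n → ℝ
  /-- public opinions -/
  P : ℕ → Fin n → ℝ
  B0_mem : ∀ i, B 0 i ∈ Set.Icc (0:ℝ) 1
  s_bool : ∀ t i, s t i = 0 ∨ s t i = 1
  /-- initially all agents are non-silent -/
  s0 : ∀ i, s 0 i = 1
  /-- `P t j = B u j` where `u = max { u ≤ t | s u j = 1 }` -/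
  P_spec : ∀ t j, ∃ u, u ≤ t ∧ s u j = 1 ∧ P t j = B u j ∧
    ∀ v, v ≤ t → s v j = 1 → v ≤ u
  /-- memory-based opinion update -/
  B_upd : ∀ t i, B (t+1) i =
    B t i + ∑ j ∈ nbrs I i, I j i * (P t j - B t i)
  /-- silence update: non-silent iff at least ⌈|N(i)|/2⌉ neighbors' public opinions are within tolerance -/
  s_upd : ∀ t i, (s (t+1) i = 1 ↔
    ((nbrs I i).card + 1) / 2 ≤
      ((nbrs I i).filter (fun j => |B t i - P t j| ≤ τ i)).card)


lemma nbrs_half (i : Fin 2) :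
    nbrs (fun _ _ => (1/2 : ℝ)) i = {if i = 0 then 1 else 0} := by
  ext j
  fin_cases i <;> fin_cases j <;>
    simp [nbrs, Finset.mem_filter]

lemma half_pow_pos (t : ℕ) : (0:ℝ) < (1/2)^t := by positivity

theorem stmt_16 :
    ∃ (n : ℕ) (M : SOMplus n), IsClique M.I ∧
      ¬ ∃ v ∈ Set.Icc (0:ℝ) 1, ∀ i : Fin n, Tendsto (fun t => M.B t i) atTop (𝓝 v) := by
  refine ⟨2, ?_, ?_, ?_⟩
  · exact
    { I := fun _ _ => 1/2
      I_nonneg := by intro i j; norm_num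
      I_le_one := by intro i j; norm_num
      sum_one := by
        intro i
        rw [nbrs_half]
        rw [Finset.sum_insert (by fin_cases i <;> simp)]
        simp; norm_num
      τ := fun _ => 0
      τ_mem := by intro i; simp
      B := fun t i => if i = 0 then 1 - (1/2)^t else (1/2)^t
      s := fun t _ => if t = 0 then 1 else 0
      P := fun _ j => if j = 0 then 0 else 1
      B0_mem := by
        intro i; fin_cases i <;> simp
      s_bool := by intro t i; by_cases h : t = 0 <;> simp [h]
      s0 := by intro i; simp
      P_spec := by
        intro t j
        refine ⟨0, Nat.zero_le _, by simp, by fin_cases j <;> simp, ?_⟩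
        intro v _ hv
        by_contra h
        have : v ≠ 0 := by omega
        simp [this] at hv
      B_upd := by
        intro t i
        rw [nbrs_half]
        fin_cases i <;> simp [Finset.sum_singleton, pow_succ] <;> ring
      s_upd := by
        intro t i
        have hp := half_pow_pos t
        have hp' : ¬ ((1/2:ℝ)^t ≤ 0) := not_le.mpr hp
        rw [nbrs_half]
        constructor
        · intro h; simp at h
        · intro h
          exfalso
          rw [Finset.filter_singleton] at h
          fin_cases i <;> norm_num at h <;>
            rw [if_neg hp'] at h <;>
            exact Finset.not_nonempty_empty h }
  · intro i j hij
    norm_num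
  · rintro ⟨v, _, hv⟩
    have h0 : Tendsto (fun t : ℕ => ((1:ℝ)/2)^t) atTop (𝓝 0) :=
      tendsto_pow_atTop_nhds_zero_of_lt_one (by norm_num) (by norm_num)
    have h1 : Tendsto (fun t => (fun t i => if i = (0:Fin 2) then 1 - (1/2:ℝ)^t else (1/2)^t) t 0) atTop (𝓝 1) := by
      simpa using (tendsto_const_nhds.sub h0)
    have h2 : Tendsto (fun t => (fun t i => if i = (0:Fin 2) then 1 - (1/2:ℝ)^t else (1/2)^t) t 1) atTop (𝓝 0) := by
      simpa using h0
    have e1 : v = 1 := tendsto_nhds_unique (hv 0) h1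
    have e2 : v = 0 := tendsto_nhds_unique (hv 1) h2
    rw [e1] at e2; norm_num at e2
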